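/- For any extensive form game G and any formula φ ∈ Φ with ⟦φ⟧ ⊊ Ω(G), it holds that ⟦G^{c,s}_i(φ)⟧ = ∅ for every integer i ≥ |Ω(G)| − 1, where |Ω(G)| is the number of outcomes of G. -/

import Mathlib

/-- An extensive form game: a nonempty finite rooted tree. Nodes are represented as
positions, i.e. lists of child indices with the *head* being the most recent step,
so the root is `[]` and the parent of `i :: t` is `t`. Each node carries an agent
label (meaningful on non-leaf nodes) and a set of propositional variables
(meaningful on leaf nodes, the outcomes). -/
structure Game (Agent PropVar : Type) where
  Node : Set (List ℕ)
  root_mem : [] ∈ Node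
  downward : ∀ (i : ℕ) (t : List ℕ), i :: t ∈ Node → t ∈ Node
  finite : Node.Finite
  label : List ℕ → Agent
  leafLabel : List ℕ → Set PropVar

namespace Game

variable {Agent PropVar : Type}

/-- A leaf node (outcome) of the game. -/
def IsOutcome (G : Game Agent PropVar) (w : List ℕ) : Prop :=
  w ∈ G.Node ∧ ∀ i : ℕ, i :: w ∉ G.Node

/-- The set `Ω(G)` of outcomes (leaf nodes) of the game. -/
def outcomes (G : Game Agent PropVar) : Set (List ℕ) := {w | G.IsOutcome w}

/-- `w ⪯ n`: node `n` lies on the simple path (including endpoints) from the root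
to `w`; in the position representation this means `n` is a suffix of `w`. -/
def below (w n : List ℕ) : Prop := n <:+ w

/-- A non-root node `n` is an `X`-achievement point by agent `a` if (1) its parent is
labelled with `a`, (2) some outcome `w ⪯ parent(n)` is not in `X`, and (3) every
outcome `w ⪯ n` is in `X`. -/
def AchievePoint (G : Game Agent PropVar) (X : Set (List ℕ)) (a : Agent) (n : List ℕ) : Prop :=
  ∃ (i : ℕ) (t : List ℕ), n = i :: t ∧ n ∈ G.Node ∧ G.label t = a ∧
    (∃ w ∈ G.outcomes, t <:+ w ∧ w ∉ X) ∧
    (∀ w ∈ G.outcomes, n <:+ w → w ∈ X)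

/-- `win_a(X)`: the minimal set of nodes containing `X`, containing every non-leaf
node labelled `a` with at least one child in the set, and containing every non-leaf
node not labelled `a` all of whose children are in the set. -/
inductive Win (G : Game Agent PropVar) (a : Agent) (X : Set (List ℕ)) : List ℕ → Prop
  | mem (w : List ℕ) (hw : w ∈ X) : Win G a X w
  | own (n : List ℕ) (hn : n ∈ G.Node) (hl : G.label n = a) (i : ℕ)
      (hi : i :: n ∈ G.Node) (h : Win G a X (i :: n)) : Win G a X n
  | other (n : List ℕ) (hn : n ∈ G.Node) (hl : G.label n ≠ a)
      (hne : ∃ i : ℕ, i :: n ∈ G.Node)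
      (h : ∀ i : ℕ, i :: n ∈ G.Node → Win G a X (i :: n)) : Win G a X n

/-- The semantic counterfactual-responsibility operator on sets of outcomes:
`Cset a X` is the set of outcomes `w ∈ X` such that some node `n` with `w ⪯ n`
belongs to `win_a(Ω(G) ∖ X)`. -/
def Cset (G : Game Agent PropVar) (a : Agent) (X : Set (List ℕ)) : Set (List ℕ) :=
  {w | w ∈ X ∧ ∃ n : List ℕ, n <:+ w ∧ G.Win a (G.outcomes \ X) n}

/-- The semantic seeing-to-it-responsibility operator on sets of outcomes:
`Sset a X` is the set of outcomes `w` such that (a) every node `n` with `w ⪯ n`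
belongs to `win_a(X)` and (b) there is an `X`-achievement point `n` by agent `a`
with `w ⪯ n`. -/
def Sset (G : Game Agent PropVar) (a : Agent) (X : Set (List ℕ)) : Set (List ℕ) :=
  {w | w ∈ G.outcomes ∧ (∀ n : List ℕ, n <:+ w → G.Win a X n) ∧
    ∃ n : List ℕ, G.AchievePoint X a n ∧ n <:+ w}

end Game

/-- The language `Φ`: `φ ::= p | ¬φ | φ∧φ | C_a φ | S_a φ`. -/
inductive Formula (Agent PropVar : Type) where
  | var : PropVar → Formula Agent PropVar
  | neg : Formula Agent PropVar → Formula Agent PropVar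
  | and : Formula Agent PropVar → Formula Agent PropVar → Formula Agent PropVar
  | C : Agent → Formula Agent PropVar → Formula Agent PropVar
  | S : Agent → Formula Agent PropVar → Formula Agent PropVar

namespace Game

variable {Agent PropVar : Type}

/-- The truth set `⟦φ⟧ ⊆ Ω(G)` of a formula. -/
def truth (G : Game Agent PropVar) : Formula Agent PropVar → Set (List ℕ)
  | .var p => {w | w ∈ G.outcomes ∧ p ∈ G.leafLabel w}
  | .neg φ => G.outcomes \ G.truth φ
  | .and φ ψ => G.truth φ ∩ G.truth ψ
  | .C a φ => G.Cset a (G.truth φ)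
  | .S a φ => G.Sset a (G.truth φ)

/-- The truth set of the `i`-th order counterfactual gap formula
`G^c_0(φ) := φ`, `G^c_{i+1}(φ) := G^c_i(φ) ∧ ⋀_{a∈𝒜} ¬C_a G^c_i(φ)`. -/
def gapCIter (G : Game Agent PropVar) (φ : Formula Agent PropVar) : ℕ → Set (List ℕ)
  | 0 => G.truth φ
  | i + 1 => G.gapCIter φ i ∩ ⋂ a : Agent, (G.outcomes \ G.Cset a (G.gapCIter φ i))

/-- The truth set of the `i`-th order combined gap formula
`G^{c,s}_0(φ) := φ`,
`G^{c,s}_{i+1}(φ) := G^{c,s}_i(φ) ∧ ⋀_{a∈𝒜} ¬C_a G^{c,s}_i(φ) ∧ ⋀_{a∈𝒜} ¬S_a G^{c,s}_i(φ)`. -/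
def gapCSIter (G : Game Agent PropVar) (φ : Formula Agent PropVar) : ℕ → Set (List ℕ)
  | 0 => G.truth φ
  | i + 1 => G.gapCSIter φ i ∩ (⋂ a : Agent, (G.outcomes \ G.Cset a (G.gapCSIter φ i)))
      ∩ (⋂ a : Agent, (G.outcomes \ G.Sset a (G.gapCSIter φ i)))

end Game

/-- `φ` contains no occurrence of the modality `C`. -/
def Formula.noC {Agent PropVar : Type} : Formula Agent PropVar → Prop
  | .var _ => True
  | .neg φ => φ.noC
  | .and φ ψ => φ.noC ∧ ψ.noC
  | .C _ _ => False
  | .S _ φ => φ.noC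

/-- `φ` contains no occurrence of the modality `S`. -/
def Formula.noS {Agent PropVar : Type} : Formula Agent PropVar → Prop
  | .var _ => True
  | .neg φ => φ.noS
  | .and φ ψ => φ.noS ∧ ψ.noS
  | .C _ φ => φ.noS
  | .S _ _ => False

namespace GapAux

variable {Agent PropVar : Type}

/-- Every suffix of a node is a node. -/
lemma suffix_mem (G : Game Agent PropVar) {w n : List ℕ} (hw : w ∈ G.Node)
    (h : n <:+ w) : n ∈ G.Node := by
  obtain ⟨l, rfl⟩ := h
  induction l with
  | nil => exact hw
  | cons i l ih => exact ih (G.downward i _ hw)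

lemma exists_child_suffix {n w : List ℕ} (h : n <:+ w) (hne : n ≠ w) :
    ∃ j, (j :: n) <:+ w := by
  obtain ⟨l, rfl⟩ := h
  have hl : l ≠ [] := by rintro rfl; exact hne rfl
  refine ⟨l.getLast hl, l.dropLast, ?_⟩
  rw [show l.getLast hl :: n = [l.getLast hl] ++ n from rfl, ← List.append_assoc,
    List.dropLast_append_getLast hl]

/-- If every outcome below `n` lies in `Y`, then `n ∈ win_a(Y)`. -/
lemma win_of_all (G : Game Agent PropVar) (a : Agent) (Y : Set (List ℕ))
    {n : List ℕ} (hn : n ∈ G.Node)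
    (hall : ∀ w ∈ G.outcomes, n <:+ w → w ∈ Y) : G.Win a Y n := by
  obtain ⟨N, hN⟩ : ∃ N, ∀ m ∈ G.Node, m.length ≤ N := by
    have hfin : (List.length '' G.Node).Finite := G.finite.image _
    obtain ⟨N, hN⟩ := hfin.bddAbove
    exact ⟨N, fun m hm => hN ⟨m, hm, rfl⟩⟩
  have key : ∀ k : ℕ, ∀ n : List ℕ, n ∈ G.Node → N ≤ n.length + k →
      (∀ w ∈ G.outcomes, n <:+ w → w ∈ Y) → G.Win a Y n := by
    intro k
    induction k with
    | zero =>
      intro n hn hlen hall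
      by_cases hc : ∃ i : ℕ, (i : ℕ) :: n ∈ G.Node
      · obtain ⟨i, hi⟩ := hc
        have := hN _ hi
        simp only [List.length_cons] at this
        omega
      · exact Game.Win.mem n (hall n ⟨hn, fun i hi => hc ⟨i, hi⟩⟩ (List.suffix_refl n))
    | succ k ih =>
      intro n hn hlen hall
      by_cases hc : ∃ i : ℕ, (i : ℕ) :: n ∈ G.Node
      · have hchild : ∀ i : ℕ, (i : ℕ) :: n ∈ G.Node → G.Win a Y (i :: n) := by
          intro i hi
          refine ih (i :: n) hi (by simp only [List.length_cons]; omega) ?_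
          intro w hw hsuf
          exact hall w hw (List.IsSuffix.trans ⟨[i], rfl⟩ hsuf)
        by_cases hl : G.label n = a
        · obtain ⟨i, hi⟩ := hc
          exact Game.Win.own n hn hl i hi (hchild i hi)
        · exact Game.Win.other n hn hl hc hchild
      · exact Game.Win.mem n (hall n ⟨hn, fun i hi => hc ⟨i, hi⟩⟩ (List.suffix_refl n))
  exact key N n hn (by omega) hall

/-- Key lemma: if `∅ ≠ X ⊆ Ω` and some outcome is missing from `X`, then some
member of `X` is counterfactually attributable to some agent. -/
lemma exists_removed (G : Game Agent PropVar) (X : Set (List ℕ))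
    (hX : X ⊆ G.outcomes) (hne : X.Nonempty)
    (hmiss : ∃ u ∈ G.outcomes, u ∉ X) :
    ∃ (a : Agent) (w : List ℕ), w ∈ X ∧ w ∈ G.Cset a X := by
  classical
  set M : Set (List ℕ) :=
    {n | n ∈ G.Node ∧ (∃ w ∈ X, n <:+ w) ∧ ∃ u ∈ G.outcomes, u ∉ X ∧ n <:+ u} with hM
  have hMfin : M.Finite := G.finite.subset (fun n hn => hn.1)
  have hMne : M.Nonempty := by
    obtain ⟨w, hw⟩ := hne
    obtain ⟨u, hu, huX⟩ := hmiss
    exact ⟨[], G.root_mem, ⟨w, hw, List.nil_suffix⟩, ⟨u, hu, huX, List.nil_suffix⟩⟩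
  obtain ⟨n, hnM, hmax⟩ := Set.Finite.exists_maximalFor List.length M hMfin hMne
  obtain ⟨hnNode, ⟨w, hwX, hnw⟩, u, huΩ, huX, hnu⟩ := hnM
  have hneq : n ≠ u := by
    rintro rfl
    have hwn : n ≠ w := by rintro rfl; exact huX hwX
    obtain ⟨j, hj⟩ := exists_child_suffix hnw hwn
    exact huΩ.2 j (suffix_mem G (hX hwX).1 hj)
  obtain ⟨j, hj⟩ := exists_child_suffix hnu hneq
  have hjNode : (j :: n) ∈ G.Node := suffix_mem G huΩ.1 hj
  have hpure : ∀ x ∈ G.outcomes, (j :: n) <:+ x → x ∈ G.outcomes \ X := by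
    intro x hx hsx
    refine ⟨hx, fun hxX => ?_⟩
    have hmem : (j :: n) ∈ M :=
      ⟨hjNode, ⟨x, hxX, hsx⟩, ⟨u, huΩ, huX, hj⟩⟩
    have := hmax hmem (by simp)
    simp at this
  have hwin : G.Win (G.label n) (G.outcomes \ X) (j :: n) :=
    win_of_all G _ _ hjNode hpure
  exact ⟨G.label n, w, hwX,
    ⟨hwX, n, hnw, Game.Win.own n hnNode rfl j hjNode hwin⟩⟩

lemma truth_subset_outcomes (G : Game Agent PropVar) :
    ∀ φ : Formula Agent PropVar, G.truth φ ⊆ G.outcomes := by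
  intro φ
  induction φ with
  | var p => exact fun w hw => hw.1
  | neg φ ih => exact fun w hw => hw.1
  | and φ ψ ih1 ih2 => exact fun w hw => ih1 hw.1
  | C a φ ih => exact fun w hw => ih hw.1
  | S a φ ih => exact fun w hw => hw.1

lemma gapCSIter_succ_subset (G : Game Agent PropVar) (φ : Formula Agent PropVar)
    (i : ℕ) : G.gapCSIter φ (i + 1) ⊆ G.gapCSIter φ i := by
  intro w hw
  exact hw.1.1

lemma gapCSIter_subset_truth (G : Game Agent PropVar) (φ : Formula Agent PropVar) :
    ∀ i : ℕ, G.gapCSIter φ i ⊆ G.truth φ := by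
  intro i
  induction i with
  | zero => exact fun w hw => hw
  | succ i ih => exact fun w hw => ih hw.1.1

end GapAux

/-- for any extensive form game `G` and formula `φ` with `⟦φ⟧ ⊊ Ω(G)`,
the truth set `⟦G^{c,s}_i(φ)⟧` is empty for every `i ≥ |Ω(G)| − 1`. -/
theorem no_higher_order_gapCS {Agent PropVar : Type} [Fintype Agent]
    (G : Game Agent PropVar) (φ : Formula Agent PropVar)
    (hφ : G.truth φ ⊂ G.outcomes)
    (i : ℕ) (hi : G.outcomes.ncard - 1 ≤ i) :
    G.gapCSIter φ i = ∅ := by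
  classical
  have hΩfin : G.outcomes.Finite := G.finite.subset (fun w hw => hw.1)
  have hsub : ∀ j, G.gapCSIter φ j ⊆ G.outcomes := fun j =>
    (GapAux.gapCSIter_subset_truth G φ j).trans (GapAux.truth_subset_outcomes G φ)
  have hfin : ∀ j, (G.gapCSIter φ j).Finite := fun j => hΩfin.subset (hsub j)
  obtain ⟨u, huΩ, huφ⟩ := Set.exists_of_ssubset hφ
  -- strict decrease while nonempty
  have hdec : ∀ j, (G.gapCSIter φ j).Nonempty →
      (G.gapCSIter φ (j + 1)).ncard < (G.gapCSIter φ j).ncard := by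
    intro j hj
    obtain ⟨a, w, hwX, hwC⟩ := GapAux.exists_removed G (G.gapCSIter φ j) (hsub j) hj
      ⟨u, huΩ, fun hu => huφ (GapAux.gapCSIter_subset_truth G φ j hu)⟩
    have hwnot : w ∉ G.gapCSIter φ (j + 1) := by
      intro hw
      have := hw.1.2
      rw [Set.mem_iInter] at this
      exact (this a).2 hwC
    exact Set.ncard_lt_ncard
      ⟨GapAux.gapCSIter_succ_subset G φ j, fun hle => hwnot (hle hwX)⟩ (hfin j)
  -- invariant
  have hinv : ∀ j, G.gapCSIter φ j = ∅ ∨ (G.gapCSIter φ j).ncard + j < G.outcomes.ncard := by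
    intro j
    induction j with
    | zero =>
      right
      simpa [Game.gapCSIter] using Set.ncard_lt_ncard hφ hΩfin
    | succ j ih =>
      rcases ih with h | h
      · left
        exact Set.eq_empty_of_subset_empty (h ▸ GapAux.gapCSIter_succ_subset G φ j)
      · rcases Set.eq_empty_or_nonempty (G.gapCSIter φ j) with he | hne
        · left
          exact Set.eq_empty_of_subset_empty (he ▸ GapAux.gapCSIter_succ_subset G φ j)
        · right
          have := hdec j hne
          omega
  rcases hinv i with h | h
  · exact h
  · by_contra hne
    have hcard : 0 < (G.gapCSIter φ i).ncard :=
      (Set.ncard_pos (hfin i)).2 (Set.nonempty_iff_ne_empty.2 hne)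
    omega
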